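/- Let d = (2323, 2241, 2231, 2117, 2079, 1957, 1953, 1899) and d' = (2321, 2263, 2187, 2163, 2037, 2001, 1919, 1909), and for integers s ≥ 1 and 0 ≤ λ ≤ s let d_{λ,s-λ} be the 8s-tuple consisting of λ copies of d followed by (s-λ) copies of d'. With N = 8s + 6 and m(e) = 1 - (N+1)^2 + \sum_i C(N+e_i,N) - \sum_{i,k} C(N+e_i-e_k,N) (binomials with top argument less than N being zero), the sequence λ ↦ m(d_{λ,s-λ}) is strictly increasing: m(d_{λ+1,s-λ-1}) > m(d_{λ,s-λ}) for all 0 ≤ λ < s. -/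

import Mathlib

/-- Moduli space dimension formula: binomials with top argument below N vanish,
which is automatic since \`Nat.choose a N = 0\` for \`a < N\` and natural subtraction
truncates at 0 (where \`Nat.choose 0 N = 0\` for \`N > 0\`). -/
def moduliDim (N : ℕ) (e : List ℕ) : ℤ :=
  1 - ((N : ℤ) + 1) ^ 2
    + (e.map (fun di => ((N + di).choose N : ℤ))).sum
    - (e.map (fun di => (e.map (fun dk => ((N + di - dk).choose N : ℤ))).sum)).sum

/-- The composed multidegree `d_{λ,μ}`: `λ` copies of `d` followed by `μ` copies of `d'`. -/
def composed (d d' : List ℕ) (lam mu : ℕ) : List ℕ :=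
  (List.replicate lam d).flatten ++ (List.replicate mu d').flatten

namespace T19
set_option maxRecDepth 8000

def Sz (N : ℕ) (L : List ℕ) : ℤ := (L.map (fun x => ((N + x).choose N : ℤ))).sum

def Tz (N : ℕ) (X Y : List ℕ) : ℤ :=
  (X.map (fun x => (Y.map (fun y => ((N + x - y).choose N : ℤ))).sum)).sum

lemma sum_join_rep (g : ℕ → ℤ) (L : List ℕ) (n : ℕ) :
    (((List.replicate n L).flatten).map g).sum = n * (L.map g).sum := by
  induction n with
  | zero => simp
  | succ n ih =>
      simp [List.replicate_succ, ih]
      push_cast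
      ring

lemma sum_map_lin (c e : ℤ) (p q : ℕ → ℤ) (L : List ℕ) :
    (L.map (fun x => c * p x + e * q x)).sum = c * (L.map p).sum + e * (L.map q).sum := by
  induction L with
  | nil => simp
  | cons a t ih => simp [ih]; ring

lemma moduli_eq (N l m : ℕ) (A B : List ℕ) :
    moduliDim N (composed A B l m) =
      1 - ((N : ℤ) + 1) ^ 2 + l * Sz N A + m * Sz N B
        - ((l : ℤ) * l * Tz N A A + l * m * Tz N A B + m * l * Tz N B A + m * m * Tz N B B) := by
  have happ : ∀ g : ℕ → ℤ, ((composed A B l m).map g).sum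
      = l * (A.map g).sum + m * (B.map g).sum := by
    intro g
    unfold composed
    rw [List.map_append, List.sum_append, sum_join_rep, sum_join_rep]
  unfold moduliDim
  have hinner : ∀ di : ℕ, ((composed A B l m).map (fun dk => ((N + di - dk).choose N : ℤ))).sum
      = (l : ℤ) * (A.map (fun dk => ((N + di - dk).choose N : ℤ))).sum
        + (m : ℤ) * (B.map (fun dk => ((N + di - dk).choose N : ℤ))).sum := fun di => happ _
  rw [happ]
  simp only [hinner]
  rw [happ, sum_map_lin, sum_map_lin]
  unfold Sz Tz
  ring

lemma cross_mul (a b j : ℕ) (hab : b ≤ a) : a * (b - j) ≤ b * (a - j) := by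
  rcases Nat.le_total j b with h | h
  · have h1 : a * (b - j) + a * j = a * b := by rw [← Nat.mul_add]; rw [Nat.sub_add_cancel h]
    have h2 : b * (a - j) + b * j = b * a := by
      rw [← Nat.mul_add]; rw [Nat.sub_add_cancel (le_trans h hab)]
    have h3 : b * j ≤ a * j := Nat.mul_le_mul_right _ hab
    have h4 : a * b = b * a := Nat.mul_comm a b
    omega
  · have : b - j = 0 := by omega
    simp [this]

lemma ratio_pow (a b : ℕ) (hab : b ≤ a) : ∀ j, a ^ j * b.choose j ≤ b ^ j * a.choose j := by
  intro j
  induction j with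
  | zero => simp
  | succ j ih =>
      apply Nat.le_of_mul_le_mul_right _ (Nat.succ_pos j)
      rw [mul_assoc, mul_assoc, Nat.choose_succ_right_eq b j, Nat.choose_succ_right_eq a j]
      calc a ^ (j+1) * (b.choose j * (b - j))
          = (a * (b - j)) * (a ^ j * b.choose j) := by ring
        _ ≤ (a * (b - j)) * (b ^ j * a.choose j) := Nat.mul_le_mul_left _ ih
        _ ≤ (b * (a - j)) * (b ^ j * a.choose j) :=
            Nat.mul_le_mul_right _ (cross_mul a b j hab)
        _ = b ^ (j+1) * (a.choose j * (a - j)) := by ring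

lemma pow_ratio_ge (a b M j0 : ℕ) (hab : b ≤ a) (h0 : M * b ^ j0 ≤ a ^ j0) :
    ∀ j, j0 ≤ j → M * b ^ j ≤ a ^ j := by
  intro j hj
  induction j, hj using Nat.le_induction with
  | base => exact h0
  | succ j hj ih =>
      calc M * b ^ (j+1) = (M * b ^ j) * b := by ring
        _ ≤ a ^ j * b := Nat.mul_le_mul_right _ ih
        _ ≤ a ^ j * a := Nat.mul_le_mul_left _ hab
        _ = a ^ (j+1) := by ring

lemma ratio_const (a b M j0 : ℕ) (hb : 0 < b) (hab : b ≤ a) (h0 : M * b ^ j0 ≤ a ^ j0) :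
    ∀ j, j0 ≤ j → M * b.choose j ≤ a.choose j := by
  intro j hj
  have h1 := ratio_pow a b hab j
  have h2 := pow_ratio_ge a b M j0 hab h0 j hj
  have h3 : M * b ^ j * b.choose j ≤ a ^ j * b.choose j := Nat.mul_le_mul_right _ h2
  have h4 : b ^ j * (M * b.choose j) ≤ b ^ j * a.choose j := by
    calc b ^ j * (M * b.choose j) = M * b ^ j * b.choose j := by ring
      _ ≤ a ^ j * b.choose j := h3
      _ ≤ b ^ j * a.choose j := h1
  exact Nat.le_of_mul_le_mul_left h4 (Nat.pow_pos hb)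

lemma hr46 : ∀ j, 199 ≤ j → 46 * (2263).choose j ≤ (2321).choose j := by
  apply ratio_const 2321 2263 46 199 (by norm_num) (by norm_num)
  norm_num

lemma L2 : ∀ k, 200 ≤ k → 10625 * (425).choose k ≤ (2263).choose k := by
  apply ratio_const 2263 425 10625 200 (by norm_num) (by norm_num)
  norm_num

lemma Linf : ∀ k, 200 ≤ k → (2321).choose k + 8 * (2263).choose k ≤ (2323).choose k := by
  intro k hk
  obtain ⟨j, rfl⟩ : ∃ j, k = j + 1 := ⟨k - 1, by omega⟩
  have hj : 199 ≤ j := by omega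
  have hpas : (2323).choose (j+1) = (2322).choose j + ((2321).choose j + (2321).choose (j+1)) := by
    rw [show (2323:ℕ) = 2322 + 1 by norm_num, Nat.choose_succ_succ' 2322 j,
        show (2322:ℕ) = 2321 + 1 by norm_num, Nat.choose_succ_succ' 2321 j]
  have h22 : (2321).choose j ≤ (2322).choose j := Nat.choose_le_choose j (by norm_num)
  have hr := hr46 j hj
  have hkey : 8 * (2263).choose (j+1) ≤ 2 * (2321).choose j := by
    apply Nat.le_of_mul_le_mul_right _ (Nat.succ_pos j)
    rw [mul_assoc, Nat.choose_succ_right_eq 2263 j]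
    calc 8 * ((2263).choose j * (2263 - j))
        ≤ 8 * ((2263).choose j * 2064) := by
          apply Nat.mul_le_mul_left
          apply Nat.mul_le_mul_left
          omega
      _ = 16512 * (2263).choose j := by ring
      _ ≤ ((2 * (j+1)) * 46) * (2263).choose j := by
          apply Nat.mul_le_mul_right
          omega
      _ = (2 * (j + 1)) * (46 * (2263).choose j) := by ring
      _ ≤ (2 * (j + 1)) * (2321).choose j := Nat.mul_le_mul_left _ hr
      _ = 2 * (2321).choose j * (j+1) := by ring
  omega

def dA : List ℕ := [2323, 2241, 2231, 2117, 2079, 1957, 1953, 1899]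
def dB : List ℕ := [2321, 2263, 2187, 2163, 2037, 2001, 1919, 1909]
def DL : List ℕ := [0, 82, 92, 206, 244, 366, 370, 424, 0, 10, 124, 162, 284, 288, 342, 0, 114, 152, 274, 278, 332, 0, 38, 160, 164, 218, 0, 122, 126, 180, 0, 4, 58, 0, 54, 0, 2, 60, 136, 160, 286, 322, 404, 414, 54, 78, 204, 240, 322, 332, 44, 68, 194, 230, 312, 322, 80, 116, 198, 208, 42, 78, 160, 170, 38, 48, 34, 44, 80, 90, 204, 242, 364, 368, 422, 22, 32, 146, 184, 306, 310, 364, 70, 108, 230, 234, 288, 46, 84, 206, 210, 264, 80, 84, 138, 44, 48, 102, 20, 10]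

def Afun (k : ℕ) : ℕ := (dA.map (fun a => a.choose k)).sum
def Bfun (k : ℕ) : ℕ := (dB.map (fun a => a.choose k)).sum
def ufun (k : ℕ) : ℕ := (DL.map (fun a => a.choose k)).sum

def Ad (k : ℕ) : ℕ := (dA.map (fun a => a.descFactorial k)).sum
def Bd (k : ℕ) : ℕ := (dB.map (fun a => a.descFactorial k)).sum
def ud (k : ℕ) : ℕ := (DL.map (fun a => a.descFactorial k)).sum

lemma sum_desc (L : List ℕ) (k : ℕ) :
    (L.map (fun a => a.descFactorial k)).sum
      = Nat.factorial k * (L.map (fun a => a.choose k)).sum := by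
  induction L with
  | nil => simp
  | cons a t ih =>
      rw [List.map_cons, List.sum_cons, List.map_cons, List.sum_cons, ih,
        Nat.descFactorial_eq_factorial_mul_choose, Nat.mul_add]

lemma val_Ad {k v : ℕ} (h : Ad k = Nat.factorial k * v) : Afun k = v := by
  apply Nat.eq_of_mul_eq_mul_left (Nat.factorial_pos k)
  unfold Afun
  rw [← sum_desc dA k]; exact h

lemma val_Bd {k v : ℕ} (h : Bd k = Nat.factorial k * v) : Bfun k = v := by
  apply Nat.eq_of_mul_eq_mul_left (Nat.factorial_pos k)
  unfold Bfun
  rw [← sum_desc dB k]; exact h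

lemma val_ud {k v : ℕ} (h : ud k = Nat.factorial k * v) : ufun k = v := by
  apply Nat.eq_of_mul_eq_mul_left (Nat.factorial_pos k)
  unfold ufun
  rw [← sum_desc DL k]; exact h

lemma keyd : ∀ k < 200, 13 ≤ k →
    1456 * Bd k + 364 * k * (k * ud (k-1) + ud k) ≤ 1456 * Ad k := by decide

lemma key_low (k : ℕ) (h13 : 13 ≤ k) (h200 : k < 200) :
    1456 * Bfun k + (364 * k * ufun (k-1) + 364 * k * ufun k) ≤ 1456 * Afun k := by
  obtain ⟨j, rfl⟩ : ∃ j, k = j + 1 := ⟨k - 1, by omega⟩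
  apply Nat.le_of_mul_le_mul_right _ (Nat.factorial_pos (j+1))
  have hA : Ad (j+1) = Nat.factorial (j+1) * Afun (j+1) := sum_desc dA (j+1)
  have hB : Bd (j+1) = Nat.factorial (j+1) * Bfun (j+1) := sum_desc dB (j+1)
  have hu1 : ud j = Nat.factorial j * ufun j := sum_desc DL j
  have hu2 : ud (j+1) = Nat.factorial (j+1) * ufun (j+1) := sum_desc DL (j+1)
  have hf : Nat.factorial (j+1) = (j+1) * Nat.factorial j := Nat.factorial_succ j
  have hk := keyd (j+1) h200 h13
  calc (1456 * Bfun (j+1) + (364 * (j+1) * ufun (j+1-1) + 364 * (j+1) * ufun (j+1)))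
        * Nat.factorial (j+1)
      = 1456 * Bd (j+1) + 364 * (j+1) * ((j+1) * ud ((j+1)-1) + ud (j+1)) := by
        simp only [Nat.add_sub_cancel]
        rw [hB, hu1, hu2, hf]; ring
    _ ≤ 1456 * Ad (j+1) := hk
    _ = 1456 * Afun (j+1) * Nat.factorial (j+1) := by rw [hA]; ring

lemma DL_le : ∀ t ∈ DL, t ≤ 424 := by decide

lemma ufun_le (j : ℕ) : ufun j ≤ 100 * (424).choose j := by
  have h : ∀ x ∈ DL.map (fun a => a.choose j), x ≤ (424).choose j := by
    intro x hx
    rw [List.mem_map] at hx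
    obtain ⟨t, ht, rfl⟩ := hx
    exact Nat.choose_le_choose j (DL_le t ht)
  have := List.sum_le_card_nsmul (DL.map (fun a => a.choose j)) ((424).choose j) h
  have hl : DL.length = 100 := rfl
  simpa [ufun, smul_eq_mul, hl] using this

lemma ufun_zero (j : ℕ) (hj : 425 ≤ j) : ufun j = 0 := by
  apply List.sum_eq_zero
  intro x hx
  rw [List.mem_map] at hx
  obtain ⟨t, ht, rfl⟩ := hx
  exact Nat.choose_eq_zero_of_lt (by have := DL_le t ht; omega)

lemma Afun_ge (k : ℕ) : (2323).choose k ≤ Afun k := by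
  simp only [Afun, dA, List.map_cons, List.map_nil, List.sum_cons, List.sum_nil]
  omega

lemma Bfun_le (k : ℕ) : Bfun k ≤ (2321).choose k + 7 * (2263).choose k := by
  have h1 := Nat.choose_le_choose k (show (2187:ℕ) ≤ 2263 by norm_num)
  have h2 := Nat.choose_le_choose k (show (2163:ℕ) ≤ 2263 by norm_num)
  have h3 := Nat.choose_le_choose k (show (2037:ℕ) ≤ 2263 by norm_num)
  have h4 := Nat.choose_le_choose k (show (2001:ℕ) ≤ 2263 by norm_num)
  have h5 := Nat.choose_le_choose k (show (1919:ℕ) ≤ 2263 by norm_num)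
  have h6 := Nat.choose_le_choose k (show (1909:ℕ) ≤ 2263 by norm_num)
  simp only [Bfun, dB, List.map_cons, List.map_nil, List.sum_cons, List.sum_nil]
  omega


lemma key_high (k : ℕ) (h200 : 200 ≤ k) :
    1456 * Bfun k + (364 * k * ufun (k-1) + 364 * k * ufun k) ≤ 1456 * Afun k := by
  have hA := Afun_ge k
  have hB := Bfun_le k
  have hLinf := Linf k h200
  rcases Nat.le_total k 425 with h425 | h425
  · -- 200 ≤ k ≤ 425
    obtain ⟨j, rfl⟩ : ∃ j, k = j + 1 := ⟨k - 1, by omega⟩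
    have hpas : (424).choose j + (424).choose (j+1) = (425).choose (j+1) :=
      (Nat.choose_succ_succ' 424 j).symm
    have hu1 := ufun_le j
    have hu2 := ufun_le (j+1)
    have hL2' := L2 (j+1) h200
    simp only [Nat.add_sub_cancel] at *
    generalize hx1 : (424:ℕ).choose j = x1 at *
    generalize hx2 : (424:ℕ).choose (j+1) = x2 at *
    generalize hx3 : (425:ℕ).choose (j+1) = x3 at *
    generalize hx4 : (2263:ℕ).choose (j+1) = x4 at *
    generalize hx5 : (2321:ℕ).choose (j+1) = x5 at *
    generalize hx6 : (2323:ℕ).choose (j+1) = x6 at *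
    generalize hu7 : ufun j = y1 at *
    generalize hu8 : ufun (j+1) = y2 at *
    -- goal: 1456 * Bfun (j+1) + (364*(j+1)*y1 + 364*(j+1)*y2) ≤ 1456 * Afun (j+1)
    have hg : 364 * (j+1) * y1 + 364 * (j+1) * y2 ≤ 36400 * (j+1) * x3 := by
      have g1 : 364 * (j+1) * y1 ≤ 364 * (j+1) * (100 * x1) := Nat.mul_le_mul_left _ hu1
      have g2 : 364 * (j+1) * y2 ≤ 364 * (j+1) * (100 * x2) := Nat.mul_le_mul_left _ hu2
      have g3 : 364 * (j+1) * (100 * x1) + 364 * (j+1) * (100 * x2)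
          = 36400 * (j+1) * (x1 + x2) := by ring
      rw [hpas] at g3
      omega
    have g4 : 36400 * (j+1) * x3 ≤ 36400 * 425 * x3 :=
      Nat.mul_le_mul_right _ (Nat.mul_le_mul_left _ (by omega))
    have g5 : 15470000 * x3 ≤ 1456 * x4 := by
      calc 15470000 * x3 = 1456 * (10625 * x3) := by ring
        _ ≤ 1456 * x4 := Nat.mul_le_mul_left _ hL2'
    omega
  · -- k ≥ 425; then ufun (k-1) and ufun k vanish except possibly k = 425
    rcases Nat.eq_or_lt_of_le h425 with rfl | h426
    · -- k = 425 exactly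
      have hz : ufun 425 = 0 := ufun_zero 425 (le_refl _)
      have hu1 := ufun_le 424
      have hch : (424:ℕ).choose 424 = 1 := Nat.choose_self 424
      have hL2' : 10625 * (425:ℕ).choose 425 ≤ (2263:ℕ).choose 425 := L2 425 (by norm_num)
      have hch2 : (425:ℕ).choose 425 = 1 := Nat.choose_self 425
      rw [hch] at hu1
      rw [hch2] at hL2'
      have h424 : (425:ℕ) - 1 = 424 := by norm_num
      rw [h424, hz]
      generalize hx4 : (2263:ℕ).choose 425 = x4 at *
      generalize hx5 : (2321:ℕ).choose 425 = x5 at *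
      generalize hx6 : (2323:ℕ).choose 425 = x6 at *
      generalize hu7 : ufun 424 = y1 at *
      omega
    · have hz1 : ufun (k-1) = 0 := ufun_zero (k-1) (by omega)
      have hz2 : ufun k = 0 := ufun_zero k (by omega)
      rw [hz1, hz2]
      omega

lemma key (k : ℕ) (h13 : 13 ≤ k) :
    1456 * Bfun k + (364 * k * ufun (k-1) + 364 * k * ufun k) ≤ 1456 * Afun k := by
  rcases Nat.lt_or_ge k 200 with h | h
  · exact key_low k h13 h
  · exact key_high k h

lemma vdm (N x : ℕ) : (N + x).choose N
    = ∑ k ∈ Finset.range (N+1), x.choose k * N.choose k := by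
  rw [Nat.add_comm, Nat.add_choose_eq, Finset.Nat.sum_antidiagonal_eq_sum_range_succ_mk]
  apply Finset.sum_congr rfl
  intro k hk
  rw [Finset.mem_range] at hk
  rw [Nat.choose_symm (by omega : k ≤ N)]

lemma choose_id (N k : ℕ) (hk : k ≤ N) :
    N * N.choose k = (k+1) * N.choose (k+1) + k * N.choose k := by
  have h := Nat.choose_succ_right_eq N k
  have h2 : (k+1) * N.choose (k+1) = (N - k) * N.choose k := by
    rw [mul_comm (k+1), h]; ring
  rw [h2, ← Nat.add_mul]
  congr 1
  omega

def Sn (N : ℕ) (L : List ℕ) : ℕ := (L.map (fun x => (N + x).choose N)).sum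
def Tn (N : ℕ) (X Y : List ℕ) : ℕ :=
  (X.map (fun x => (Y.map (fun y => (N + x - y).choose N)).sum)).sum

lemma sn_expand (N : ℕ) (L : List ℕ) :
    Sn N L = ∑ k ∈ Finset.range (N+1), (L.map (fun a => a.choose k)).sum * N.choose k := by
  unfold Sn
  induction L with
  | nil => simp
  | cons a t ih =>
      rw [List.map_cons, List.sum_cons, vdm, ih, ← Finset.sum_add_distrib]
      apply Finset.sum_congr rfl
      intro k _
      rw [List.map_cons, List.sum_cons, Nat.add_mul]

lemma Av0 : Afun 0 = 8 := val_Ad (by decide)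
lemma Av1 : Afun 1 = 16800 := val_Ad (by decide)
lemma Av2 : Afun 2 = 17716580 := val_Ad (by decide)
lemma Av3 : Afun 3 = 12509057820 := val_Ad (by decide)
lemma Av4 : Afun 4 = 6652213979432 := val_Ad (by decide)
lemma Av5 : Afun 5 = 2841783005691476 := val_Ad (by decide)
lemma Av6 : Afun 6 = 1015718687001103030 := val_Ad (by decide)
lemma Av7 : Afun 7 = 312380773194945931850 := val_Ad (by decide)
lemma Av8 : Afun 8 = 84373518631298464871050 := val_Ad (by decide)
lemma Av9 : Afun 9 = 20328247146123471587011034 := val_Ad (by decide)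
lemma Av10 : Afun 10 = 4422598748695943821563488228 := val_Ad (by decide)
lemma Av11 : Afun 11 = 877440823924700637358359211856 := val_Ad (by decide)
lemma Av12 : Afun 12 = 160043388553481082485489167345287 := val_Ad (by decide)
lemma Bv0 : Bfun 0 = 8 := val_Bd (by decide)
lemma Bv1 : Bfun 1 = 16800 := val_Bd (by decide)
lemma Bv2 : Bfun 2 = 17716580 := val_Bd (by decide)
lemma Bv3 : Bfun 3 = 12509057820 := val_Bd (by decide)
lemma Bv4 : Bfun 4 = 6652213979432 := val_Bd (by decide)
lemma Bv5 : Bfun 5 = 2841783005691476 := val_Bd (by decide)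
lemma Bv6 : Bfun 6 = 1015718687001103030 := val_Bd (by decide)
lemma Bv7 : Bfun 7 = 312380773170898868810 := val_Bd (by decide)
lemma Bv8 : Bfun 8 = 84373518573669678295690 := val_Bd (by decide)
lemma Bv9 : Bfun 9 = 20328247078144225898737114 := val_Bd (by decide)
lemma Bv10 : Bfun 10 = 4422598695893379758239213028 := val_Bd (by decide)
lemma Bv11 : Bfun 11 = 877440793469759707395981454928 := val_Bd (by decide)
lemma Bv12 : Bfun 12 = 160043374616340872675761738170631 := val_Bd (by decide)
lemma uv0 : ufun 0 = 100 := val_ud (by decide)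
lemma uv1 : ufun 1 = 16068 := val_ud (by decide)
lemma uv2 : ufun 2 = 2031486 := val_ud (by decide)
lemma uv3 : ufun 3 = 200882916 := val_ud (by decide)
lemma uv4 : ufun 4 = 16210247331 := val_ud (by decide)
lemma uv5 : ufun 5 = 1102460288278 := val_ud (by decide)
lemma uv6 : ufun 6 = 64744533899921 := val_ud (by decide)
lemma uv7 : ufun 7 = 3344241805777096 := val_ud (by decide)
lemma uv8 : ufun 8 = 154114799949362559 := val_ud (by decide)
lemma uv9 : ufun 9 = 6408692143479943370 := val_ud (by decide)
lemma uv10 : ufun 10 = 242700084944282675709 := val_ud (by decide)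
lemma uv11 : ufun 11 = 8434243632259918185572 := val_ud (by decide)
lemma uv12 : ufun 12 = 270685574707755197860745 := val_ud (by decide)


lemma absorb (N : ℕ) (h : N = 14 ∨ N = 22 ∨ 30 ≤ N) :
    ∀ k, k ≤ 10 → 364 * N.choose k ≤ 13728 * N.choose 12 := by
  rcases h with rfl | rfl | h30
  · simp only [Nat.choose_eq_descFactorial_div_factorial]; decide
  · simp only [Nat.choose_eq_descFactorial_div_factorial]; decide
  · have step : ∀ r, r < 15 → N.choose r ≤ N.choose (r+1) := fun r hr =>
      Nat.choose_le_succ_of_lt_half_left (by omega)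
    have mono : ∀ j, j ≤ 12 → N.choose (12 - j) ≤ N.choose 12 := by
      intro j
      induction j with
      | zero => intro _; simp
      | succ j ih =>
          intro hj
          have h1 : N.choose (12 - (j+1)) ≤ N.choose (12 - (j+1) + 1) := step _ (by omega)
          have h2 : 12 - (j+1) + 1 = 12 - j := by omega
          rw [h2] at h1
          exact le_trans h1 (ih (by omega))
    intro k hk
    have hm := mono (12 - k) (by omega)
    rw [show 12 - (12 - k) = k from by omega] at hm
    calc 364 * N.choose k ≤ 364 * N.choose 12 := Nat.mul_le_mul_left _ hm
      _ ≤ 13728 * N.choose 12 := Nat.mul_le_mul_right _ (by norm_num)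

lemma core (N s : ℕ) (hs : 1 ≤ s) (hN : N = 8*s+6) :
    364 * (N - 6) * Sn N DL + 1456 * Sn N dB ≤ 1456 * Sn N dA := by
  have h14 : 14 ≤ N := by omega
  rw [sn_expand N dA, sn_expand N dB, sn_expand N DL]
  have fold_u : ∀ k, (DL.map (fun a => a.choose k)).sum = ufun k := fun _ => rfl
  have fold_A : ∀ k, (dA.map (fun a => a.choose k)).sum = Afun k := fun _ => rfl
  have fold_B : ∀ k, (dB.map (fun a => a.choose k)).sum = Bfun k := fun _ => rfl
  simp only [fold_u, fold_A, fold_B]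
  have step1 : 364 * (N - 6) * (∑ k ∈ Finset.range (N+1), ufun k * N.choose k)
      ≤ ∑ k ∈ Finset.range (N+1),
          (364 * (k+1) * (ufun (k+1-1) * N.choose (k+1)) + 364 * k * (ufun k * N.choose k)) := by
    rw [Finset.mul_sum]
    apply Finset.sum_le_sum
    intro k hk
    rw [Finset.mem_range] at hk
    have hid := choose_id N k (by omega)
    simp only [Nat.add_sub_cancel]
    calc 364 * (N - 6) * (ufun k * N.choose k)
        ≤ 364 * N * (ufun k * N.choose k) := by
          apply Nat.mul_le_mul_right
          apply Nat.mul_le_mul_left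
          omega
      _ = 364 * ufun k * (N * N.choose k) := by ring
      _ = 364 * ufun k * ((k+1) * N.choose (k+1) + k * N.choose k) := by rw [hid]
      _ = 364 * (k+1) * (ufun k * N.choose (k+1)) + 364 * k * (ufun k * N.choose k) := by ring
  have step2 : (∑ k ∈ Finset.range (N+1),
          (364 * (k+1) * (ufun (k+1-1) * N.choose (k+1)) + 364 * k * (ufun k * N.choose k)))
      = (∑ k ∈ Finset.range (N+1), 364 * k * (ufun (k-1) * N.choose k))
        + ∑ k ∈ Finset.range (N+1), 364 * k * (ufun k * N.choose k) := by
    rw [Finset.sum_add_distrib]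
    congr 1
    have h0 := Finset.sum_range_succ' (fun k => 364 * k * (ufun (k-1) * N.choose k)) (N+1)
    have h1 := Finset.sum_range_succ (fun k => 364 * k * (ufun (k-1) * N.choose k)) (N+1)
    have hz : N.choose (N+1) = 0 := Nat.choose_succ_self N
    simp only [hz, Nat.mul_zero, Nat.zero_mul, Nat.add_zero, mul_zero] at h0 h1
    rw [h1] at h0
    exact h0.symm
  have hsplit : ∀ f : ℕ → ℕ,
      (∑ k ∈ Finset.range 13, f k) + (∑ k ∈ Finset.Ico 13 (N+1), f k)
        = ∑ k ∈ Finset.range (N+1), f k := by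
    intro f
    rw [Finset.range_eq_Ico, Finset.range_eq_Ico]
    exact Finset.sum_Ico_consecutive f (by norm_num : 0 ≤ 13) (by omega : 13 ≤ N+1)
  have main : (∑ k ∈ Finset.range (N+1),
        (364 * k * (ufun (k-1) * N.choose k) + 364 * k * (ufun k * N.choose k)
          + 1456 * (Bfun k * N.choose k)))
      ≤ ∑ k ∈ Finset.range (N+1), 1456 * (Afun k * N.choose k) := by
    rw [← hsplit (fun k => 364 * k * (ufun (k-1) * N.choose k) + 364 * k * (ufun k * N.choose k)
          + 1456 * (Bfun k * N.choose k)),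
        ← hsplit (fun k => 1456 * (Afun k * N.choose k))]
    apply Nat.add_le_add
    · -- low part k ∈ [0,12]
      have hND : N = 14 ∨ N = 22 ∨ 30 ≤ N := by omega
      have hab := absorb N hND
      have hab0 := hab 0 (by norm_num); have hab1 := hab 1 (by norm_num)
      have hab2 := hab 2 (by norm_num); have hab3 := hab 3 (by norm_num)
      have hab4 := hab 4 (by norm_num); have hab5 := hab 5 (by norm_num)
      have hab6 := hab 6 (by norm_num); have hab7 := hab 7 (by norm_num)
      have hab8 := hab 8 (by norm_num); have hab9 := hab 9 (by norm_num)
      have hab10 := hab 10 (by norm_num)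
      norm_num at hab0 hab1
      simp only [Finset.sum_range_succ, Finset.sum_range_zero]
      norm_num [Av0, Av1, Av2, Av3, Av4, Av5, Av6, Av7, Av8, Av9, Av10, Av11, Av12,
        Bv0, Bv1, Bv2, Bv3, Bv4, Bv5, Bv6, Bv7, Bv8, Bv9, Bv10, Bv11, Bv12,
        uv0, uv1, uv2, uv3, uv4, uv5, uv6, uv7, uv8, uv9, uv10, uv11, uv12]
      omega
    · -- high part k ≥ 13
      apply Finset.sum_le_sum
      intro k hk
      rw [Finset.mem_Ico] at hk
      have hkey := key k hk.1
      calc 364 * k * (ufun (k-1) * N.choose k) + 364 * k * (ufun k * N.choose k)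
            + 1456 * (Bfun k * N.choose k)
          = (1456 * Bfun k + (364 * k * ufun (k-1) + 364 * k * ufun k)) * N.choose k := by ring
        _ ≤ (1456 * Afun k) * N.choose k := Nat.mul_le_mul_right _ hkey
        _ = 1456 * (Afun k * N.choose k) := by ring
  calc 364 * (N - 6) * (∑ k ∈ Finset.range (N+1), ufun k * N.choose k)
        + 1456 * (∑ k ∈ Finset.range (N+1), Bfun k * N.choose k)
      ≤ (∑ k ∈ Finset.range (N+1),
          (364 * (k+1) * (ufun (k+1-1) * N.choose (k+1)) + 364 * k * (ufun k * N.choose k)))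
        + 1456 * (∑ k ∈ Finset.range (N+1), Bfun k * N.choose k) := Nat.add_le_add_right step1 _
    _ = ∑ k ∈ Finset.range (N+1),
          (364 * k * (ufun (k-1) * N.choose k) + 364 * k * (ufun k * N.choose k)
            + 1456 * (Bfun k * N.choose k)) := by
        rw [step2, Finset.mul_sum, ← Finset.sum_add_distrib, ← Finset.sum_add_distrib]
    _ ≤ ∑ k ∈ Finset.range (N+1), 1456 * (Afun k * N.choose k) := main
    _ = 1456 * ∑ k ∈ Finset.range (N+1), Afun k * N.choose k := (Finset.mul_sum _ _ _).symm

set_option maxHeartbeats 1000000 in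
lemma tsum_eq (N : ℕ) (hN : 14 ≤ N) :
    Tn N dA dA + Tn N dA dB + Tn N dB dA = Sn N DL := by
  have hzero : ∀ x y : ℕ, x < y → (N + x - y).choose N = 0 := fun x y h =>
    Nat.choose_eq_zero_of_lt (by omega)
  have hpos : ∀ x y : ℕ, y ≤ x → N + x - y = N + (x - y) := fun x y h => by omega
  unfold Tn Sn dA dB DL
  have hzero2 : ∀ t : ℕ, 0 < t → (N - t).choose N = 0 := fun t h =>
    Nat.choose_eq_zero_of_lt (by omega)
  simp only [List.map_cons, List.map_nil, List.sum_cons, List.sum_nil]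
  simp only [Nat.add_sub_cancel, Nat.reduceSubDiff]
  simp (disch := omega) only [hzero2, Nat.add_zero, Nat.zero_add]
  omega

lemma Sz_cast (N : ℕ) (L : List ℕ) : Sz N L = ((Sn N L : ℕ) : ℤ) := by
  unfold Sz Sn
  induction L with
  | nil => simp
  | cons a t ih => simp [ih]

lemma cast_inner (N x : ℕ) (Y : List ℕ) :
    (Y.map (fun y => ((N + x - y).choose N : ℤ))).sum
      = (((Y.map (fun y => (N + x - y).choose N)).sum : ℕ) : ℤ) := by
  induction Y with
  | nil => simp
  | cons b u ihy => simp [ihy]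

lemma Tz_cast (N : ℕ) (X Y : List ℕ) : Tz N X Y = ((Tn N X Y : ℕ) : ℤ) := by
  unfold Tz Tn
  induction X with
  | nil => simp
  | cons a t ih =>
      simp only [List.map_cons, List.sum_cons, ih, Nat.cast_add]
      rw [cast_inner]

lemma Tz_nonneg (N : ℕ) (X Y : List ℕ) : 0 ≤ Tz N X Y := by
  apply List.sum_nonneg
  intro x hx
  rw [List.mem_map] at hx
  obtain ⟨t, ht, rfl⟩ := hx
  apply List.sum_nonneg
  intro y hy
  rw [List.mem_map] at hy
  obtain ⟨u, hu, rfl⟩ := hy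
  positivity

lemma inner_nonneg (N x : ℕ) (L : List ℕ) :
    (0:ℤ) ≤ (L.map (fun y => ((N + x - y).choose N : ℤ))).sum := by
  apply List.sum_nonneg
  intro y hy
  rw [List.mem_map] at hy
  obtain ⟨u, hu, rfl⟩ := hy
  positivity

lemma TBB_ge1 (N : ℕ) : 1 ≤ Tz N dB dB := by
  have h1 : ((N + 2321 - 2321).choose N : ℤ) = 1 := by
    rw [Nat.add_sub_cancel, Nat.choose_self]; norm_num
  have houter : Tz N dB dB
      = ((dB.map (fun y => ((N + 2321 - y).choose N : ℤ))).sum)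
        + (([2263, 2187, 2163, 2037, 2001, 1919, 1909] : List ℕ).map
            (fun x => (dB.map (fun y => ((N + x - y).choose N : ℤ))).sum)).sum := by
    unfold Tz dB
    simp only [List.map_cons, List.sum_cons]
  have hinner : (dB.map (fun y => ((N + 2321 - y).choose N : ℤ))).sum
      = 1 + (([2263, 2187, 2163, 2037, 2001, 1919, 1909] : List ℕ).map
          (fun y => ((N + 2321 - y).choose N : ℤ))).sum := by
    unfold dB
    simp only [List.map_cons, List.sum_cons, h1]
  have n1 := inner_nonneg N 2321 ([2263, 2187, 2163, 2037, 2001, 1919, 1909] : List ℕ)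
  have n2 : (0:ℤ) ≤ (([2263, 2187, 2163, 2037, 2001, 1919, 1909] : List ℕ).map
      (fun x => (dB.map (fun y => ((N + x - y).choose N : ℤ))).sum)).sum := by
    apply List.sum_nonneg
    intro y hy
    rw [List.mem_map] at hy
    obtain ⟨u, hu, rfl⟩ := hy
    exact inner_nonneg N u dB
  rw [houter, hinner]
  linarith


end T19

open T19 in
theorem stmt_19 :
    let d : List ℕ := [2323, 2241, 2231, 2117, 2079, 1957, 1953, 1899]
    let d' : List ℕ := [2321, 2263, 2187, 2163, 2037, 2001, 1919, 1909]
    ∀ s lam : ℕ, 1 ≤ s → lam < s →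
      moduliDim (8 * s + 6) (composed d d' lam (s - lam)) <
      moduliDim (8 * s + 6) (composed d d' (lam + 1) (s - lam - 1)) := by
  intro d d' s lam hs hlt
  obtain ⟨b, hb⟩ : ∃ b, s - lam = b + 1 := ⟨s - lam - 1, by omega⟩
  rw [hb]
  have hb2 : b + 1 - 1 = b := by omega
  rw [hb2]
  have hd : d = dA := rfl
  have hd' : d' = dB := rfl
  rw [hd, hd', moduli_eq, moduli_eq]
  set N := 8*s+6 with hN
  have h14 : 14 ≤ N := by omega
  have hcore := core N s hs rfl
  have htsum := tsum_eq N h14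
  have h86 : 364 * (N - 6) = 2912 * s := by omega
  rw [h86, ← htsum] at hcore
  have hcoren : 2912 * s * (Tn N dA dA + Tn N dA dB + Tn N dB dA) + 1456 * Sn N dB
      ≤ 1456 * Sn N dA := hcore
  have hcz : 2912 * (s:ℤ) * (Tz N dA dA + Tz N dA dB + Tz N dB dA) + 1456 * Sz N dB
      ≤ 1456 * Sz N dA := by
    rw [Sz_cast, Sz_cast, Tz_cast, Tz_cast, Tz_cast]
    exact_mod_cast hcoren
  have hTAA := Tz_nonneg N dA dA
  have hTAB := Tz_nonneg N dA dB
  have hTBA := Tz_nonneg N dB dA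
  have hTBB := TBB_ge1 N
  have hsz : (s:ℤ) = (lam:ℤ) + (b:ℤ) + 1 := by
    have : s = lam + b + 1 := by omega
    exact_mod_cast this
  have ha : (0:ℤ) ≤ (lam:ℤ) := Int.natCast_nonneg lam
  have hc : (0:ℤ) ≤ (b:ℤ) := Int.natCast_nonneg b
  have h1 : (0:ℤ) ≤ (2*(b:ℤ)+1) * Tz N dA dA := mul_nonneg (by linarith) hTAA
  have h2 : (0:ℤ) ≤ (3*(lam:ℤ)+(b:ℤ)+2) * (Tz N dA dB + Tz N dB dA) := by
    apply mul_nonneg (by linarith) (by linarith)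
  have h3 : (1:ℤ) ≤ (2*(b:ℤ)+1) * Tz N dB dB := by
    have hcc : (1:ℤ) ≤ 2*(b:ℤ)+1 := by linarith
    calc (1:ℤ) = 1 * 1 := by norm_num
      _ ≤ (2*(b:ℤ)+1) * Tz N dB dB := mul_le_mul hcc hTBB (by norm_num) (by linarith)
  rw [hsz] at hcz
  push_cast
  nlinarith [h1, h2, h3, hcz]
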